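/- For a positive semidefinite Hermitian 3×3 matrix M = [[1, conj(v_k), conj(v_m)], [v_k, V_{kk}, V_{km}], [v_m, conj(V_{km}), V_{mm}]], if additionally V_{kk} = |v_k|² and V_{mm} = |v_m|², then V_{km} = v_k·conj(v_m). -/

import Mathlib

open scoped ComplexOrder

theorem tcr_exact_when_diag_tight (vk vm Vkm : ℂ) (Vkk Vmm : ℝ)
    (h : (!![(1 : ℂ), star vk, star vm;
             vk, (Vkk : ℂ), Vkm;
             vm, star Vkm, (Vmm : ℂ)]).PosSemidef)
    (hkk : Vkk = ‖vk‖ ^ 2) (hmm : Vmm = ‖vm‖ ^ 2) :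
    Vkm = vk * star vm := by
  set M := !![(1 : ℂ), star vk, star vm;
             vk, (Vkk : ℂ), Vkm;
             vm, star Vkm, (Vmm : ℂ)] with hM
  set x : Fin 3 → ℂ := ![-(star vk), 1, 0] with hx
  have hform : dotProduct (star x) (M.mulVec x) = 0 := by
    simp only [hM, hx, Matrix.of_apply, dotProduct, Matrix.mulVec, Fin.sum_univ_three,
      Matrix.cons_val', Matrix.cons_val_zero, Matrix.cons_val_one, Matrix.head_cons,
      Matrix.empty_val', Matrix.cons_val_fin_one, Matrix.head_fin_const,
      Matrix.cons_val_two, Matrix.tail_cons, Pi.star_apply, star_neg, star_star,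
      star_one, star_zero, hkk]
    have : ((‖vk‖ ^ 2 : ℝ) : ℂ) = vk * star vk := by
      rw [show (star vk) = (starRingEnd ℂ) vk from rfl, Complex.mul_conj]
      norm_cast
      exact Complex.sq_norm vk
    rw [this]
    ring
  have hzero := (h.dotProduct_mulVec_zero_iff x).mp hform
  have h2 := congrFun hzero 2
  simp only [hM, hx, Matrix.of_apply, Matrix.mulVec, dotProduct, Fin.sum_univ_three,
    Matrix.cons_val', Matrix.cons_val_zero, Matrix.cons_val_one, Matrix.head_cons,
    Matrix.empty_val', Matrix.cons_val_fin_one, Matrix.cons_val_two, Matrix.tail_cons, Matrix.head_fin_const,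
    Pi.zero_apply, mul_one, mul_zero, add_zero, mul_neg] at h2
  have : star Vkm = vm * star vk := by linear_combination h2
  calc Vkm = star (star Vkm) := by rw [star_star]
    _ = star (vm * star vk) := by rw [this]
    _ = vk * star vm := by simp [mul_comm]
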